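/- Let a1, a2, a3 be real numbers with a1 ≠ a2, a2 ≠ a3, a3 ≠ a1. Define P^(3)(M) = (P1, P2, P3) by P1 = M1·[(a1a2 + 8a1² − a3a2 + a3a1)M1² + (3a3a2 − 3a3a1 + 9a1a2)M2² + (9a3a1 − 3a1a2 + 3a3a2)M3²], P2 = M2·[(−3a3a2 + 3a3a1 + 9a1a2)M1² + (a3a2 − a3a1 + 8a2² + a1a2)M2² + (3a3a1 − 3a1a2 + 9a3a2)M3²], P3 = M3·[(9a3a1 + 3a1a2 − 3a3a2)M1² + (−3a3a1 + 3a1a2 + 9a3a2)M2² + (a3a1 + 8a3² − a1a2 + a3a2)M3²]. Then the function H4(M, γ) = ⟨P^(3)(M), γ⟩ is a first integral of the system Ṁ = M × aM, γ̇ = 3·γ × aM. -/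

import Mathlib

/-- Cross product in `ℝ³`. -/
def cross3 (v w : Fin 3 → ℝ) : Fin 3 → ℝ :=
  ![v 1 * w 2 - v 2 * w 1, v 2 * w 0 - v 0 * w 2, v 0 * w 1 - v 1 * w 0]

/-- Euclidean inner product in `ℝ³`. -/
def dot3 (v w : Fin 3 → ℝ) : ℝ := v 0 * w 0 + v 1 * w 1 + v 2 * w 2

/-- Componentwise action of a diagonal matrix. -/
def dmul3 (a v : Fin 3 → ℝ) : Fin 3 → ℝ := fun i => a i * v i

/-- The cubic polynomial vector P⁽³⁾(M) of the k = 3 modified Euler–Poinsot system. -/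
def P3vec (a1 a2 a3 : ℝ) (M : Fin 3 → ℝ) : Fin 3 → ℝ :=
  ![M 0 * ((a1 * a2 + 8 * a1 ^ 2 - a3 * a2 + a3 * a1) * (M 0) ^ 2
        + (3 * a3 * a2 - 3 * a3 * a1 + 9 * a1 * a2) * (M 1) ^ 2
        + (9 * a3 * a1 - 3 * a1 * a2 + 3 * a3 * a2) * (M 2) ^ 2),
    M 1 * ((-3 * a3 * a2 + 3 * a3 * a1 + 9 * a1 * a2) * (M 0) ^ 2
        + (a3 * a2 - a3 * a1 + 8 * a2 ^ 2 + a1 * a2) * (M 1) ^ 2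
        + (3 * a3 * a1 - 3 * a1 * a2 + 9 * a3 * a2) * (M 2) ^ 2),
    M 2 * ((9 * a3 * a1 + 3 * a1 * a2 - 3 * a3 * a2) * (M 0) ^ 2
        + (-3 * a3 * a1 + 3 * a1 * a2 + 9 * a3 * a2) * (M 1) ^ 2
        + (a3 * a1 + 8 * a3 ^ 2 - a1 * a2 + a3 * a2) * (M 2) ^ 2)]

/-- H4 = ⟨P⁽³⁾(M), γ⟩ is a first integral of Ṁ = M × aM, γ̇ = 3·γ × aM. -/
theorem H4_first_integral (a1 a2 a3 : ℝ)
    (h12 : a1 ≠ a2) (h23 : a2 ≠ a3) (h31 : a3 ≠ a1)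
    (M γ M' γ' : ℝ → Fin 3 → ℝ)
    (hM : ∀ t i, HasDerivAt (fun s => M s i) (M' t i) t)
    (hγ : ∀ t i, HasDerivAt (fun s => γ s i) (γ' t i) t)
    (heqM : ∀ t, M' t = cross3 (M t) (dmul3 ![a1, a2, a3] (M t)))
    (heqγ : ∀ t, γ' t = fun i => 3 * cross3 (γ t) (dmul3 ![a1, a2, a3] (M t)) i) :
    ∀ t, HasDerivAt (fun s => dot3 (P3vec a1 a2 a3 (M s)) (γ s)) 0 t := by
  intro t
  have A0 := (hM t 0).pow 2
  have A1 := (hM t 1).pow 2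
  have A2 := (hM t 2).pow 2
  have i0 := ((A0.const_mul (a1 * a2 + 8 * a1 ^ 2 - a3 * a2 + a3 * a1)).add
      (A1.const_mul (3 * a3 * a2 - 3 * a3 * a1 + 9 * a1 * a2))).add
      (A2.const_mul (9 * a3 * a1 - 3 * a1 * a2 + 3 * a3 * a2))
  have i1 := ((A0.const_mul (-3 * a3 * a2 + 3 * a3 * a1 + 9 * a1 * a2)).add
      (A1.const_mul (a3 * a2 - a3 * a1 + 8 * a2 ^ 2 + a1 * a2))).add
      (A2.const_mul (3 * a3 * a1 - 3 * a1 * a2 + 9 * a3 * a2))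
  have i2 := ((A0.const_mul (9 * a3 * a1 + 3 * a1 * a2 - 3 * a3 * a2)).add
      (A1.const_mul (-3 * a3 * a1 + 3 * a1 * a2 + 9 * a3 * a2))).add
      (A2.const_mul (a3 * a1 + 8 * a3 ^ 2 - a1 * a2 + a3 * a2))
  have T := ((((hM t 0).mul i0).mul (hγ t 0)).add
      (((hM t 1).mul i1).mul (hγ t 1))).add
      (((hM t 2).mul i2).mul (hγ t 2))
  simp only [dot3, P3vec, Matrix.cons_val_zero, Matrix.cons_val_one, Matrix.head_cons,
    Matrix.cons_val_two, Matrix.tail_cons]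
  convert T using 1
  · rfl
  · rfl
  · rfl
  have e1 := heqM t
  have e2 := heqγ t
  have m0 := congrFun e1 0
  have m1 := congrFun e1 1
  have m2 := congrFun e1 2
  have g0 := congrFun e2 0
  have g1 := congrFun e2 1
  have g2 := congrFun e2 2
  simp only [cross3, dmul3, Matrix.cons_val_zero, Matrix.cons_val_one, Matrix.head_cons,
    Matrix.cons_val_two, Matrix.tail_cons] at m0 m1 m2 g0 g1 g2
  rw [m0, m1, m2, g0, g1, g2]
  simp only [Pi.mul_apply, Pi.add_apply, Pi.pow_apply]
  ring
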